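/- Suppose C ⊇ M is full and ⟨A_i : i ∈ I⟩ is an M-f.s. sequence over C. Then ⟨A_i : i ∈ I⟩ is indiscernible over C if and only if tp(A_i/C) = tp(A_j/C) for all i, j ∈ I. -/

import Mathlib

open FirstOrder FirstOrder.Language Cardinal Set

universe u v w

namespace MonadicNIP

variable {L : FirstOrder.Language.{u, u}} {C : Type u} [L.Structure C]

/-- The complete type of the tuple `a` over the parameter set `B`:
all formulas with parameters from `B` and variables `α` satisfied by `a`. -/
def tpSet {α : Type v} (B : Set C) (a : α → C) : Set (L.Formula (B ⊕ α)) :=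
  {φ | φ.Realize (Sum.elim (Subtype.val : B → C) a)}

/-- A set of formulas over `B` (a "type") is finitely satisfied in `M` if each of
its formulas is realized by a tuple from `M`. -/
def FinSat (M : Set C) {α : Type v} {B : Set C} (p : Set (L.Formula (B ⊕ α))) : Prop :=
  ∀ φ ∈ p, ∃ m : α → C, (∀ i, m i ∈ M) ∧
    Formula.Realize φ (Sum.elim (Subtype.val : B → C) m)

/-- `p` is a complete type over `B` (in the monster `C`): finitely satisfiable
in `C` and deciding every formula. -/
def IsCompleteType {α : Type v} (B : Set C) (p : Set (L.Formula (B ⊕ α))) : Prop :=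
  (∀ s : Finset (L.Formula (B ⊕ α)), ↑s ⊆ p →
      ∃ a : α → C, ∀ φ ∈ s, Formula.Realize φ (Sum.elim (Subtype.val : B → C) a)) ∧
    ∀ φ : L.Formula (B ⊕ α), φ ∈ p ∨ φ.not ∈ p

/-- `tp(A/B)` is finitely satisfied in `M` (formulated without an enumeration of `A`). -/
def SetFinSat (L : FirstOrder.Language.{u, u}) {C : Type u} [L.Structure C] (M B A : Set C) : Prop :=
  ∀ (n : ℕ) (φ : L.Formula (B ⊕ Fin n)) (a : Fin n → C), (∀ i, a i ∈ A) →
    φ.Realize (Sum.elim (Subtype.val : B → C) a) →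
    ∃ m : Fin n → C, (∀ i, m i ∈ M) ∧ φ.Realize (Sum.elim (Subtype.val : B → C) m)

/-- `⟨A i : i ∈ I⟩` is an `M`-f.s. sequence over `B`. -/
def IsFSSeq (L : FirstOrder.Language.{u, u}) {C : Type u} [L.Structure C] (M B : Set C) {I : Type v} [LinearOrder I] (A : I → Set C) : Prop :=
  ∀ i : I, SetFinSat L M (B ∪ ⋃ j < i, A j) (A i)

/-- The average type of an ultrafilter `U` on `M^n` over the parameter set `B`. -/
def Av {n : ℕ} {M : Set C} (U : Ultrafilter (Fin n → M)) (B : Set C) :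
    Set (L.Formula (B ⊕ Fin n)) :=
  {φ | {m : Fin n → M |
      Formula.Realize φ (Sum.elim (Subtype.val : B → C) (fun i => (m i : C)))} ∈ U}

/-- `C0` is full (for non-splitting over `M`): every complete type over `M`
in finitely many variables (realized in the monster) is realized in `C0`. -/
def IsFull (L : FirstOrder.Language.{u, u}) {C : Type u} [L.Structure C] (M C0 : Set C) : Prop :=
  ∀ (n : ℕ) (a : Fin n → C), ∃ c : Fin n → C, (∀ i, c i ∈ C0) ∧
    tpSet (L := L) M a = tpSet (L := L) M c

/-- The sequence of tuples `a` is indiscernible over `B`. -/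
def IndiscernibleOver (L : FirstOrder.Language.{u, u}) {C : Type u} [L.Structure C] {I : Type v} [LinearOrder I] {α : Type w} (B : Set C)
    (a : I → α → C) : Prop :=
  ∀ (n : ℕ) (i j : Fin n → I), StrictMono i → StrictMono j →
    tpSet (L := L) B (fun p : Fin n × α => a (i p.1) p.2) =
      tpSet (L := L) B (fun p : Fin n × α => a (j p.1) p.2)

/-- The type `p` over `B` does not split over `M0`: parameter tuples from `B`
with the same type over `M0` are interchangeable in `p`. -/
def NotSplitOver (M0 : Set C) {B : Set C} {α : Type v}
    (p : Set (L.Formula (B ⊕ α))) : Prop :=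
  ∀ (k : ℕ) (b b' : Fin k → B) (φ : L.Formula (Fin k ⊕ α)),
    tpSet (L := L) M0 (fun i => (b i : C)) = tpSet (L := L) M0 (fun i => (b' i : C)) →
    (φ.relabel (Sum.elim (fun i => Sum.inl (b i)) Sum.inr) ∈ p ↔
      φ.relabel (Sum.elim (fun i => Sum.inl (b' i)) Sum.inr) ∈ p)


/-- Transfer principle: equality of types lets us exchange `u` and `u'` in any
realization that factors through the parameters and the tuple. -/
theorem tp_transfer {B : Set C} {β : Type v} {u u' : β → C}
    (h : tpSet (L := L) B u = tpSet (L := L) B u')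
    {γ : Type w} (φ : L.Formula γ) (g : γ → ↥B ⊕ β) :
    φ.Realize (Sum.elim (Subtype.val : B → C) u ∘ g) ↔
      φ.Realize (Sum.elim (Subtype.val : B → C) u' ∘ g) := by
  have := Set.ext_iff.mp h (φ.relabel g)
  simpa [tpSet, Formula.realize_relabel] using this

/-- Finite satisfiability in `M` implies non-splitting over `M` (one direction). -/
theorem nonsplit_aux {M B : Set C} {β : Type v} {A : β → C}
    (hfs : FinSat (L := L) M (tpSet (L := L) B A))
    {κ : Type w} {b b' : κ → C} (hb : ∀ l, b l ∈ B) (hb' : ∀ l, b' l ∈ B)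
    (htp : tpSet (L := L) M b = tpSet (L := L) M b')
    (θ : L.Formula (κ ⊕ β)) (hθ : θ.Realize (Sum.elim b A)) :
    θ.Realize (Sum.elim b' A) := by
  by_contra hneg
  set g : κ ⊕ β → ↥B ⊕ β := Sum.map (fun l => ⟨b l, hb l⟩) id with hg
  set g' : κ ⊕ β → ↥B ⊕ β := Sum.map (fun l => ⟨b' l, hb' l⟩) id with hg'
  have e : Sum.elim (Subtype.val : B → C) A ∘ g = Sum.elim b A := by
    funext x; cases x <;> rfl
  have e' : Sum.elim (Subtype.val : B → C) A ∘ g' = Sum.elim b' A := by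
    funext x; cases x <;> rfl
  have hmem : (θ.relabel g) ⊓ (θ.relabel g').not ∈ tpSet (L := L) B A := by
    simp only [tpSet, Set.mem_setOf_eq, Formula.realize_inf, Formula.realize_not,
      Formula.realize_relabel, e, e']
    exact ⟨hθ, hneg⟩
  obtain ⟨m, hm, hreal⟩ := hfs _ hmem
  rw [Formula.realize_inf, Formula.realize_not, Formula.realize_relabel,
    Formula.realize_relabel] at hreal
  have e1 : Sum.elim (Subtype.val : B → C) m ∘ g = Sum.elim b m := by
    funext x; cases x <;> rfl
  have e2 : Sum.elim (Subtype.val : B → C) m ∘ g' = Sum.elim b' m := by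
    funext x; cases x <;> rfl
  rw [e1, e2] at hreal
  obtain ⟨h1, h2⟩ := hreal
  set h : κ ⊕ β → ↥M ⊕ κ := Sum.elim Sum.inr (fun x => Sum.inl ⟨m x, hm x⟩) with hh
  have e3 : Sum.elim (Subtype.val : M → C) b ∘ h = Sum.elim b m := by
    funext x; cases x <;> rfl
  have e4 : Sum.elim (Subtype.val : M → C) b' ∘ h = Sum.elim b' m := by
    funext x; cases x <;> rfl
  have := tp_transfer (L := L) htp θ h
  rw [e3, e4] at this
  exact h2 (this.mp h1)

/-- Finite satisfiability in `M` implies non-splitting over `M`. -/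
theorem nonsplit {M B : Set C} {β : Type v} {A : β → C}
    (hfs : FinSat (L := L) M (tpSet (L := L) B A))
    {κ : Type w} {b b' : κ → C} (hb : ∀ l, b l ∈ B) (hb' : ∀ l, b' l ∈ B)
    (htp : tpSet (L := L) M b = tpSet (L := L) M b')
    (θ : L.Formula (κ ⊕ β)) :
    θ.Realize (Sum.elim b A) ↔ θ.Realize (Sum.elim b' A) :=
  ⟨nonsplit_aux hfs hb hb' htp θ, nonsplit_aux hfs hb' hb htp.symm θ⟩

/-- Fullness applies to tuples indexed by any finite type. -/
theorem isFull_fintype {M C0 : Set C} (hfull : IsFull L M C0) {κ : Type v} [Fintype κ]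
    (u : κ → C) : ∃ d : κ → C, (∀ x, d x ∈ C0) ∧
      tpSet (L := L) M u = tpSet (L := L) M d := by
  obtain ⟨e⟩ : Nonempty (κ ≃ Fin (Fintype.card κ)) := ⟨Fintype.equivFin κ⟩
  obtain ⟨d', hd', htp⟩ := hfull _ (u ∘ e.symm)
  refine ⟨d' ∘ e, fun x => hd' _, ?_⟩
  ext φ
  have key := tp_transfer (L := L) htp φ (Sum.map id e)
  have e1 : Sum.elim (Subtype.val : M → C) (u ∘ e.symm) ∘ Sum.map id e =
      Sum.elim (Subtype.val : M → C) u := by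
    funext x; cases x with
    | inl => rfl
    | inr x => simp
  have e2 : Sum.elim (Subtype.val : M → C) d' ∘ Sum.map id e =
      Sum.elim (Subtype.val : M → C) (d' ∘ e) := by
    funext x; cases x <;> rfl
  rw [e1, e2] at key
  simpa [tpSet] using key

/-- Restricting to free variables, then relabelling, preserves realization
provided the valuations are compatible. -/
theorem restrict_bridge {β : Type v} {γ : Type w} [DecidableEq β] (φ : L.Formula β)
    (g : (↑(BoundedFormula.freeVarFinset φ) : Set β) → γ) (w : γ → C) (v : β → C)
    (h : ∀ (x : β) (hx : x ∈ (↑(BoundedFormula.freeVarFinset φ) : Set β)),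
      w (g ⟨x, hx⟩) = v x) :
    (Formula.relabel g (φ.restrictFreeVar (Set.inclusion (Set.Subset.refl _)))).Realize w ↔
      φ.Realize v := by
  rw [Formula.realize_relabel]
  have e : w ∘ g = v ∘ (Subtype.val : (↑(BoundedFormula.freeVarFinset φ) : Set β) → β) := by
    funext x
    exact h x.1 x.2
  rw [e]
  exact BoundedFormula.realize_restrictFreeVar' (Set.Subset.refl _)

/-- The key induction: an `M`-f.s. sequence over a full `C0 ⊇ M` whose terms all
have the same type over `C0` has all increasing tuples of the same length of the
same type over `C0`. -/
theorem same_type_tuples (M : L.ElementarySubstructure C) (C0 : Set C)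
    (hMC : (M : Set C) ⊆ C0) (hfull : IsFull L (M : Set C) C0)
    {I : Type v} [LinearOrder I] {α : Type w} (a : I → α → C)
    (hfs : ∀ i : I, FinSat (M : Set C)
        (tpSet (L := L) (C0 ∪ ⋃ j < i, Set.range (a j)) (a i)))
    (hsame : ∀ i j : I, tpSet (L := L) C0 (a i) = tpSet (L := L) C0 (a j)) :
    ∀ (n : ℕ) (i j : Fin n → I), StrictMono i → StrictMono j →
      tpSet (L := L) C0 (fun p : Fin n × α => a (i p.1) p.2) =
        tpSet (L := L) C0 (fun p : Fin n × α => a (j p.1) p.2) := by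
  intro n
  induction n with
  | zero =>
    intro i j _ _
    exact congrArg _ (funext fun p => p.1.elim0)
  | succ n IH =>
    have key : ∀ (i j : Fin (n + 1) → I), StrictMono i → StrictMono j →
        ∀ φ : L.Formula (↥C0 ⊕ (Fin (n + 1) × α)),
        φ.Realize (Sum.elim (Subtype.val : C0 → C)
          (fun p : Fin (n + 1) × α => a (i p.1) p.2)) →
        φ.Realize (Sum.elim (Subtype.val : C0 → C)
          (fun p : Fin (n + 1) × α => a (j p.1) p.2)) := by
      intro i j hi hj φ hφ
      classical
      set s : Finset (↥C0 ⊕ (Fin (n + 1) × α)) := φ.freeVarFinset with hs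
      set sC : Finset ↥C0 := s.biUnion (Sum.elim (fun c => {c}) (fun _ => ∅)) with hsC
      set t : Finset α := s.biUnion (Sum.elim (fun _ => ∅) (fun p => {p.2})) with ht
      have memC : ∀ {c : ↥C0}, Sum.inl c ∈ s → c ∈ sC := fun h =>
        Finset.mem_biUnion.2 ⟨_, h, by simp⟩
      have memt : ∀ {p : Fin (n + 1) × α}, Sum.inr p ∈ s → p.2 ∈ t := fun h =>
        Finset.mem_biUnion.2 ⟨_, h, by simp⟩
      -- the finite tuple of parameters-and-earlier-entries used by `φ`, for a
      -- given strictly increasing sequence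
      set U : (Fin (n + 1) → I) → (↥sC ⊕ (Fin n × ↥t)) → C := fun i' =>
        Sum.elim (fun c => ((c : ↥C0) : C)) (fun p => a (i' p.1.castSucc) p.2) with hU
      -- the variable-restriction map
      obtain ⟨F, hF⟩ : ∃ F : ∀ y : ↥C0 ⊕ (Fin (n + 1) × α), y ∈ s →
            (↥sC ⊕ (Fin n × ↥t)) ⊕ α,
          ∀ (i' : Fin (n + 1) → I) (y : ↥C0 ⊕ (Fin (n + 1) × α)) (hy : y ∈ s),
            Sum.elim (U i') (a (i' (Fin.last n))) (F y hy) =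
              Sum.elim (Subtype.val : C0 → C)
                (fun p : Fin (n + 1) × α => a (i' p.1) p.2) y := by
        refine ⟨fun y => Sum.rec (motive := fun y => y ∈ s → (↥sC ⊕ (Fin n × ↥t)) ⊕ α)
          (fun c hc => Sum.inl (Sum.inl ⟨c, memC hc⟩))
          (fun p hp => if hk : (p.1 : ℕ) < n
            then Sum.inl (Sum.inr (⟨(p.1 : ℕ), hk⟩, ⟨p.2, memt hp⟩))
            else Sum.inr p.2) y, ?_⟩
        rintro i' (c | ⟨k, y⟩) hy
        · rfl
        · show Sum.elim (U i') (a (i' (Fin.last n)))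
            (if hk : (k : ℕ) < n
              then Sum.inl (Sum.inr (⟨(k : ℕ), hk⟩, ⟨y, memt hy⟩))
              else Sum.inr y) = a (i' k) y
          split_ifs with hk
          · have hcast : (⟨(k : ℕ), hk⟩ : Fin n).castSucc = k := by
              apply Fin.ext; simp
            show a (i' (⟨(k : ℕ), hk⟩ : Fin n).castSucc) y = a (i' k) y
            rw [hcast]
          · have hlast : k = Fin.last n := by
              have h2 := k.isLt
              apply Fin.ext
              simp only [Fin.val_last]
              omega
            rw [hlast]
            rfl
      set g : (↑s : Set (↥C0 ⊕ (Fin (n + 1) × α))) → (↥sC ⊕ (Fin n × ↥t)) ⊕ α :=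
        fun x => F x.1 x.2 with hg
      set θ : L.Formula ((↥sC ⊕ (Fin n × ↥t)) ⊕ α) :=
        Formula.relabel g (φ.restrictFreeVar (Set.inclusion (Set.Subset.refl _))) with hθ
      have hbr : ∀ i' : Fin (n + 1) → I,
          (θ.Realize (Sum.elim (U i') (a (i' (Fin.last n)))) ↔
            φ.Realize (Sum.elim (Subtype.val : C0 → C)
              (fun p : Fin (n + 1) × α => a (i' p.1) p.2))) := by
        intro i'
        exact restrict_bridge φ g _ _ (fun x hx => hF i' x hx)
      -- membership of the tuples in the relevant parameter sets
      have hUmem : ∀ (i' : Fin (n + 1) → I), StrictMono i' →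
          ∀ l, U i' l ∈ C0 ∪ ⋃ j' < i' (Fin.last n), Set.range (a j') := by
        intro i' hi' l
        cases l with
        | inl c => exact Set.mem_union_left _ c.1.2
        | inr p =>
          refine Set.mem_union_right _ ?_
          refine Set.mem_iUnion.mpr ⟨i' p.1.castSucc, Set.mem_iUnion.mpr
            ⟨hi' (Fin.castSucc_lt_last p.1), ⟨(p.2 : α), rfl⟩⟩⟩
      -- the full-set replacement
      obtain ⟨d, hd, htpud⟩ := isFull_fintype (L := L) hfull (U i)
      have hdmem : ∀ (i' : Fin (n + 1) → I),
          ∀ l, d l ∈ C0 ∪ ⋃ j' < i' (Fin.last n), Set.range (a j') :=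
        fun i' l => Set.mem_union_left _ (hd l)
      -- step 1: realize with (U i, a (i last))
      have h1 : θ.Realize (Sum.elim (U i) (a (i (Fin.last n)))) := (hbr i).mpr hφ
      -- step 2: non-splitting at i-last replaces U i by d
      have h2 : θ.Realize (Sum.elim d (a (i (Fin.last n)))) :=
        (nonsplit (L := L) (hfs (i (Fin.last n))) (hUmem i hi) (hdmem i) htpud θ).mp h1
      -- step 3: d lies in C0, so swap the last entry using hsame
      have h3 : θ.Realize (Sum.elim d (a (j (Fin.last n)))) := by
        have hlast := hsame (i (Fin.last n)) (j (Fin.last n))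
        have key3 := tp_transfer (L := L) hlast θ
          (Sum.elim (fun l => Sum.inl ⟨d l, hd l⟩) Sum.inr)
        have e3 : Sum.elim (Subtype.val : C0 → C) (a (i (Fin.last n))) ∘
            Sum.elim (fun l => Sum.inl (⟨d l, hd l⟩ : ↥C0)) Sum.inr =
              Sum.elim d (a (i (Fin.last n))) := by
          funext x; cases x <;> rfl
        have e4 : Sum.elim (Subtype.val : C0 → C) (a (j (Fin.last n))) ∘
            Sum.elim (fun l => Sum.inl (⟨d l, hd l⟩ : ↥C0)) Sum.inr =
              Sum.elim d (a (j (Fin.last n))) := by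
          funext x; cases x <;> rfl
        rw [e3, e4] at key3
        exact key3.mp h2
      -- step 4: tp_M (U i) = tp_M (U j) from the induction hypothesis
      have hUU : tpSet (L := L) (M : Set C) (U i) = tpSet (L := L) (M : Set C) (U j) := by
        have hIH := IH (fun k => i k.castSucc) (fun k => j k.castSucc)
          (hi.comp Fin.strictMono_castSucc) (hj.comp Fin.strictMono_castSucc)
        ext ρ
        simp only [tpSet, Set.mem_setOf_eq]
        have key4 := tp_transfer (L := L) hIH ρ
          (Sum.elim (fun m => Sum.inl (⟨m.1, hMC m.2⟩ : ↥C0))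
            (Sum.elim (fun c => Sum.inl (c : ↥C0)) (fun p => Sum.inr (p.1, (p.2 : α)))))
        have e5 : ∀ i' : Fin (n + 1) → I,
            Sum.elim (Subtype.val : C0 → C)
              (fun p : Fin n × α => a (i' p.1.castSucc) p.2) ∘
            (Sum.elim (fun m : ↥(M : Set C) => Sum.inl (⟨m.1, hMC m.2⟩ : ↥C0))
              (Sum.elim (fun c : ↥sC => Sum.inl (c : ↥C0))
                (fun p : Fin n × ↥t => Sum.inr (p.1, (p.2 : α))))) =
            Sum.elim (Subtype.val : ↥(M : Set C) → C) (U i') := by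
          intro i'
          funext x
          rcases x with m | (c | p) <;> rfl
        rw [e5 i, e5 j] at key4
        exact key4
      -- step 5: non-splitting at j-last replaces d by U j
      have h4 : θ.Realize (Sum.elim (U j) (a (j (Fin.last n)))) :=
        (nonsplit (L := L) (hfs (j (Fin.last n))) (hUmem j hj) (hdmem j)
          (hUU.symm.trans htpud) θ).mpr h3
      exact (hbr j).mp h4
    intro i j hi hj
    ext φ
    simp only [tpSet, Set.mem_setOf_eq]
    exact ⟨key i j hi hj φ, key j i hj hi φ⟩

/-- If `C0 ⊇ M` is full and `⟨A_i : i ∈ I⟩` is an `M`-f.s. sequence over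
`C0` (with fixed enumerations), then the sequence is indiscernible over `C0` iff
`tp(A_i/C0) = tp(A_j/C0)` for all `i, j`. -/
theorem statement13 (M : L.ElementarySubstructure C) (C0 : Set C)
    (hMC : (M : Set C) ⊆ C0) (hfull : IsFull L (M : Set C) C0)
    {I : Type v} [LinearOrder I] {α : Type w} (a : I → α → C)
    (hfs : ∀ i : I, FinSat (M : Set C)
        (tpSet (L := L) (C0 ∪ ⋃ j < i, Set.range (a j)) (a i))) :
    IndiscernibleOver L C0 a ↔
      ∀ i j : I, tpSet (L := L) C0 (a i) = tpSet (L := L) C0 (a j) := by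
  constructor
  · intro hind i j
    have hmono : ∀ x : I, StrictMono (fun _ : Fin 1 => x) := by
      intro x p q hpq
      exact absurd (Subsingleton.elim p q) (ne_of_lt hpq)
    have h := hind 1 (fun _ => i) (fun _ => j) (hmono i) (hmono j)
    ext ρ
    simp only [tpSet, Set.mem_setOf_eq]
    have key := tp_transfer (L := L) h ρ (Sum.map id (fun x : α => ((0 : Fin 1), x)))
    have e1 : ∀ x : I,
        Sum.elim (Subtype.val : C0 → C)
            (fun p : Fin 1 × α => a ((fun _ : Fin 1 => x) p.1) p.2) ∘
          Sum.map id (fun y : α => ((0 : Fin 1), y)) =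
        Sum.elim (Subtype.val : C0 → C) (a x) := by
      intro x; funext z; cases z <;> rfl
    rw [e1 i, e1 j] at key
    exact key
  · intro hsame n i j hi hj
    exact same_type_tuples M C0 hMC hfull a hfs hsame n i j hi hj

end MonadicNIP
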